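/- arXiv:1603.06491 — 3 statements merged into one kernel-verified Lean document; each statement's English description precedes it below -/
import Mathlib

section
/- Let α > 0, λ > 0, and let ψ(x) = (x+i)^{−α−1}. The wavelet transform of g(x) = e^{2πiλx} with respect to ψ, defined by W_g(a,b) = a^{−1} ∫_ℝ g(t) conj(ψ((t−b)/a)) dt, equals C a^α λ^α e^{2πiλ(b+ai)} for all a > 0 and b ∈ ℝ, where C is a constant independent of a, b, λ. If instead λ ≤ 0 then W_g(a,b) = 0. -/
open Complex MeasureTheory Real
open scoped FourierTransform


/-- The wavelet `ψ(x) = (x+i)^{-α-1}`. -/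
noncomputable def psiW (α : ℝ) (x : ℝ) : ℂ := ((x : ℂ) + I) ^ (-(α : ℂ) - 1)

/-- Wavelet transform of `f` with respect to `psiW α`. -/
noncomputable def waveletT (α : ℝ) (f : ℝ → ℂ) (a b : ℝ) : ℂ :=
  (a : ℂ)⁻¹ * ∫ t : ℝ, f t * (starRingEnd ℂ) (psiW α ((t - b) / a))

namespace Stmt3Aux

noncomputable def hW (α : ℝ) (ξ : ℝ) : ℂ :=
  ((max ξ 0 ^ α : ℝ) : ℂ) * Complex.exp (-(2 * π * ξ) : ℝ)

lemma hW_of_pos {α ξ : ℝ} (hξ : 0 < ξ) :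
    hW α ξ = (ξ : ℂ) ^ (α : ℂ) * Complex.exp (-(2 * π * ξ) : ℝ) := by
  rw [hW, max_eq_left hξ.le, Complex.ofReal_cpow hξ.le]

lemma hW_of_nonpos {α ξ : ℝ} (hα : α ≠ 0) (hξ : ξ ≤ 0) : hW α ξ = 0 := by
  rw [hW, max_eq_right hξ, Real.zero_rpow hα]
  simp

lemma continuous_hW {α : ℝ} (hα : 0 < α) : Continuous (hW α) := by
  refine Continuous.mul (continuous_ofReal.comp ?_) ?_
  · refine continuous_iff_continuousAt.2 fun x => ?_
    exact (Real.continuousAt_rpow_const _ _ (Or.inr hα.le)).comp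
      ((continuous_id.max continuous_const).continuousAt)
  · exact Complex.continuous_exp.comp (continuous_ofReal.comp (by fun_prop))

lemma norm_hW {α : ℝ} (ξ : ℝ) : ‖hW α ξ‖ = max ξ 0 ^ α * Real.exp (-(2 * π * ξ)) := by
  rw [hW, norm_mul, Complex.norm_real, Real.norm_eq_abs,
    _root_.abs_of_nonneg (Real.rpow_nonneg (le_max_right _ _) _),
    Complex.norm_exp_ofReal]

lemma integrable_bound {β : ℝ} (hβ : 0 < β) :
    Integrable (Set.indicator (Set.Ioi 0) fun ξ : ℝ => Real.exp (-ξ) * ξ ^ (β - 1)) := by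
  rw [integrable_indicator_iff measurableSet_Ioi]
  exact Real.GammaIntegral_convergent hβ

lemma le_bound {α : ℝ} (hα : 0 < α) (n : ℕ) (ξ : ℝ) :
    ‖(ξ : ℂ) ^ n * hW α ξ‖ ≤
      Set.indicator (Set.Ioi 0) (fun ξ : ℝ => Real.exp (-ξ) * ξ ^ (α + n)) ξ := by
  rcases le_or_gt ξ 0 with hξ | hξ
  · rw [hW_of_nonpos hα.ne' hξ, mul_zero, norm_zero]
    exact Set.indicator_nonneg (fun x hx => by have h0x : (0:ℝ) < x := hx; positivity) _
  · rw [Set.indicator_of_mem (Set.mem_Ioi.2 hξ), norm_mul, norm_pow, Complex.norm_real, Real.norm_eq_abs,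
      _root_.abs_of_pos hξ, norm_hW, max_eq_left hξ.le]
    have h1 : ξ ^ n * (ξ ^ α * Real.exp (-(2 * π * ξ))) = ξ ^ (α + n) * Real.exp (-(2 * π * ξ)) := by
      rw [← Real.rpow_natCast ξ n, ← mul_assoc, ← Real.rpow_add hξ, add_comm]
    rw [h1]
    have h2 : Real.exp (-(2 * π * ξ)) ≤ Real.exp (-ξ) := by
      apply Real.exp_le_exp.2
      nlinarith [Real.pi_gt_three]
    calc ξ ^ (α + n) * Real.exp (-(2 * π * ξ)) ≤ ξ ^ (α + n) * Real.exp (-ξ) := by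
          exact mul_le_mul_of_nonneg_left h2 (by positivity)
      _ = Real.exp (-ξ) * ξ ^ (α + n) := by ring

lemma integrable_pow_hW {α : ℝ} (hα : 0 < α) (n : ℕ) :
    Integrable (fun ξ : ℝ => (ξ : ℂ) ^ n * hW α ξ) := by
  refine (integrable_bound (β := α + n + 1) (by positivity)).mono' ?_ ?_
  · exact ((continuous_ofReal.pow n).mul (continuous_hW hα)).aestronglyMeasurable
  · refine Filter.Eventually.of_forall fun ξ => ?_
    simpa [add_sub_cancel_right] using le_bound hα n ξ

lemma integrable_hW {α : ℝ} (hα : 0 < α) : Integrable (hW α) := by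
  simpa using integrable_pow_hW hα 0

lemma integrable_id_hW {α : ℝ} (hα : 0 < α) :
    Integrable (fun ξ : ℝ => (ξ : ℂ) * hW α ξ) := by
  simpa using integrable_pow_hW hα 1

lemma hW_zero {α : ℝ} (hα : 0 < α) : hW α 0 = 0 := hW_of_nonpos hα.ne' le_rfl

lemma hasDerivAt_u {α : ℝ} (hα : 0 < α) (ξ : ℝ) :
    HasDerivAt (fun x : ℝ => (x : ℂ) * hW α x)
      (((α : ℂ) + 1) * hW α ξ - 2 * π * ((ξ : ℂ) * hW α ξ)) ξ := by
  rcases lt_trichotomy ξ 0 with h | h | h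
  · have hz : hW α ξ = 0 := hW_of_nonpos hα.ne' h.le
    have hev : (fun x : ℝ => (x : ℂ) * hW α x) =ᶠ[nhds ξ] fun _ => 0 := by
      filter_upwards [Iio_mem_nhds h] with x hx
      rw [hW_of_nonpos hα.ne' (le_of_lt hx), mul_zero]
    rw [hz]
    simpa using (hasDerivAt_const ξ (0 : ℂ)).congr_of_eventuallyEq hev
  · subst h
    rw [hW_zero hα]
    have : HasDerivAt (fun x : ℝ => (x : ℂ) * hW α x) 0 0 := by
      rw [hasDerivAt_iff_tendsto_slope]
      have hev : slope (fun x : ℝ => (x : ℂ) * hW α x) 0 =ᶠ[nhdsWithin 0 {(0:ℝ)}ᶜ] hW α := by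
        refine eventually_mem_nhdsWithin.mono fun x hx => ?_
        have hx0 : (x : ℂ) ≠ 0 := by
          simpa using Set.mem_compl_singleton_iff.mp hx
        have hxr : (x : ℝ) ≠ 0 := Set.mem_compl_singleton_iff.mp hx
        simp only [slope, vsub_eq_sub, sub_zero, hW_zero hα, mul_zero]
        rw [Complex.real_smul, Complex.ofReal_inv]
        field_simp
      refine Filter.Tendsto.congr' hev.symm ?_
      have := ((continuous_hW hα).tendsto 0)
      rw [hW_zero hα] at this
      exact this.mono_left nhdsWithin_le_nhds
    simpa using this
  · -- positive case
    have hne : ((α : ℂ) + 1) ≠ 0 := by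
      intro hc
      have := congrArg Complex.re hc
      simp at this
      linarith
    have h1 : HasDerivAt (fun y : ℝ => (y : ℂ) ^ ((α : ℂ) + 1))
        (((α : ℂ) + 1) * (ξ : ℂ) ^ (α : ℂ)) ξ := by
      have hr : (α : ℂ) ≠ -1 := by
        intro hc
        have := congrArg Complex.re hc
        simp at this
        linarith
      have h0 := (hasDerivAt_ofReal_cpow_const' h.ne' hr).const_mul ((α : ℂ) + 1)
      have heq : (fun y : ℝ => ((α : ℂ) + 1) * ((y : ℂ) ^ ((α : ℂ) + 1) / ((α : ℂ) + 1)))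
          = fun y : ℝ => (y : ℂ) ^ ((α : ℂ) + 1) := by
        funext y; field_simp
      rwa [heq] at h0
    have h2 : HasDerivAt (fun y : ℝ => Complex.exp (-(2 * π * y) : ℝ))
        ((-(2 * π) : ℝ) * Complex.exp (-(2 * π * ξ) : ℝ)) ξ := by
      have hin : HasDerivAt (fun y : ℝ => -(2 * π * y)) (-(2 * π)) ξ := by
        have h0 := ((hasDerivAt_id ξ).const_mul (2 * π)).neg; rw [mul_one] at h0; exact h0
      have := (hin.ofReal_comp).cexp
      simpa [mul_comm] using this
    have hprod := h1.mul h2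
    have hev : (fun x : ℝ => (x : ℂ) * hW α x)
        =ᶠ[nhds ξ] fun y : ℝ => (y : ℂ) ^ ((α : ℂ) + 1) * Complex.exp (-(2 * π * y) : ℝ) := by
      filter_upwards [Ioi_mem_nhds h] with x hx
      rw [hW_of_pos hx, Complex.cpow_add _ _ (by exact_mod_cast (ne_of_gt hx)), Complex.cpow_one]
      ring
    have hfinal := hprod.congr_of_eventuallyEq hev
    have hval : (ξ : ℂ) ^ ((α : ℂ) + 1) = (ξ : ℂ) * (ξ : ℂ) ^ (α : ℂ) := by
      rw [Complex.cpow_add _ _ (by exact_mod_cast (ne_of_gt h)), Complex.cpow_one]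
      exact mul_comm _ _
    rw [hW_of_pos h]
    refine hfinal.congr_deriv ?_
    rw [hval]
    push_cast
    ring

open scoped RealInnerProductSpace in
lemma fourier_sub {α : ℝ} (hα : 0 < α) (w : ℝ) :
    𝓕 (fun ξ : ℝ => ((α : ℂ) + 1) * hW α ξ - 2 * π * ((ξ : ℂ) * hW α ξ)) w
      = ((α : ℂ) + 1) * 𝓕 (hW α) w - 2 * π * 𝓕 (fun x : ℝ => (x : ℂ) * hW α x) w := by
  have i1 : Integrable (fun v : ℝ => ((Real.fourierChar (-⟪v, w⟫) : Circle) : ℂ) * hW α v) := by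
    simpa [Circle.smul_def] using (Real.fourierIntegral_convergent_iff w).2 (integrable_hW hα)
  have i2 : Integrable (fun v : ℝ =>
      ((Real.fourierChar (-⟪v, w⟫) : Circle) : ℂ) * ((v : ℂ) * hW α v)) := by
    simpa [Circle.smul_def] using (Real.fourierIntegral_convergent_iff w).2 (integrable_id_hW hα)
  rw [Real.fourier_eq, Real.fourier_eq, Real.fourier_eq]
  calc (∫ v : ℝ, (Real.fourierChar (-⟪v, w⟫) : Circle) • (((α : ℂ) + 1) * hW α v
          - 2 * π * ((v : ℂ) * hW α v)))
      = ∫ v : ℝ, (((α : ℂ) + 1) * (((Real.fourierChar (-⟪v, w⟫) : Circle) : ℂ) * hW α v)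
          - (2 * π : ℂ) * (((Real.fourierChar (-⟪v, w⟫) : Circle) : ℂ)
            * ((v : ℂ) * hW α v))) := by
        congr 1; funext v; simp only [Circle.smul_def, smul_eq_mul]; ring
    _ = _ := by
        rw [integral_sub (i1.const_mul _) (i2.const_mul _), integral_const_mul, integral_const_mul]
        simp only [Circle.smul_def, smul_eq_mul]

lemma hasDerivAt_G {α : ℝ} (hα : 0 < α) (w : ℝ) :
    HasDerivAt (𝓕 (hW α))
      (-(2 * π * I) * 𝓕 (fun x : ℝ => (x : ℂ) * hW α x) w) w := by
  have hsm : Integrable (fun x : ℝ => x • hW α x) := by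
    have := integrable_id_hW hα
    simpa [Complex.real_smul] using this
  have h := Real.hasDerivAt_fourier (integrable_hW hα) hsm w
  refine h.congr_deriv ?_
  rw [Real.fourier_eq, Real.fourier_eq, ← integral_const_mul]
  congr 1
  funext v
  simp only [Circle.smul_def, smul_eq_mul]
  ring

lemma fourier_rel {α : ℝ} (hα : 0 < α) (w : ℝ) :
    (2 * π * I * w) * 𝓕 (fun x : ℝ => (x : ℂ) * hW α x) w
      = ((α : ℂ) + 1) * 𝓕 (hW α) w - 2 * π * 𝓕 (fun x : ℝ => (x : ℂ) * hW α x) w := by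
  have hdiff : Differentiable ℝ (fun x : ℝ => (x : ℂ) * hW α x) :=
    fun x => (hasDerivAt_u hα x).differentiableAt
  have hderiv : deriv (fun x : ℝ => (x : ℂ) * hW α x)
      = fun ξ : ℝ => ((α : ℂ) + 1) * hW α ξ - 2 * π * ((ξ : ℂ) * hW α ξ) :=
    funext fun ξ => (hasDerivAt_u hα ξ).deriv
  have hint : Integrable (deriv (fun x : ℝ => (x : ℂ) * hW α x)) := by
    rw [hderiv]
    exact ((integrable_hW hα).const_mul _).sub ((integrable_id_hW hα).const_mul _)
  have h := congrFun (Real.fourier_deriv (integrable_id_hW hα) hdiff hint) w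
  rw [hderiv, fourier_sub hα, smul_eq_mul] at h
  exact h.symm

lemma one_add_I_ne (w : ℝ) : (1 + I * (w : ℂ)) ≠ 0 := by
  intro hc
  have := congrArg Complex.re hc
  simp at this

lemma hasDerivAt_pow_nu (ν : ℂ) (w : ℝ) :
    HasDerivAt (fun w : ℝ => (1 + I * (w : ℂ)) ^ ν)
      (ν * (1 + I * (w : ℂ)) ^ (ν - 1) * I) w := by
  have h0 : (1 + I * (w : ℂ)) ∈ slitPlane := by
    simp [Complex.mem_slitPlane_iff]
  have h1 : HasDerivAt (fun z : ℂ => (1 + I * z) ^ ν)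
      (ν * (1 + I * (w : ℂ)) ^ (ν - 1) * I) (w : ℂ) := by
    simpa using (((hasDerivAt_id ((w : ℂ))).const_mul I).const_add 1).cpow_const h0
  exact h1.comp_ofReal

lemma fourier_hW_eq {α : ℝ} (hα : 0 < α) (w : ℝ) :
    𝓕 (hW α) w = 𝓕 (hW α) 0 * (1 + I * (w : ℂ)) ^ (-(α : ℂ) - 1) := by
  have hG : ∀ x : ℝ, HasDerivAt
      (fun x : ℝ => 𝓕 (hW α) x * (1 + I * (x : ℂ)) ^ ((α : ℂ) + 1)) 0 x := by
    intro x
    have h3 := (hasDerivAt_G hα x).mul (hasDerivAt_pow_nu ((α : ℂ) + 1) x)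
    refine h3.congr_deriv ?_
    have hrel := fourier_rel hα x
    have hpow : (1 + I * (x : ℂ)) ^ ((α : ℂ) + 1)
        = (1 + I * (x : ℂ)) ^ (((α : ℂ) + 1) - 1) * (1 + I * (x : ℂ)) := by
      nth_rewrite 3 [← Complex.cpow_one (1 + I * (x : ℂ))]
      rw [← Complex.cpow_add _ _ (one_add_I_ne x), sub_add_cancel]
    rw [hpow]
    linear_combination (-(I * (1 + I * (x : ℂ)) ^ (((α : ℂ) + 1) - 1))) * hrel
  have hconst := is_const_of_deriv_eq_zero (fun x => (hG x).differentiableAt)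
    (fun x => (hG x).deriv) w 0
  simp only [ofReal_zero, mul_zero, add_zero, Complex.one_cpow, mul_one] at hconst
  have hnz : (1 + I * (w : ℂ)) ^ ((α : ℂ) + 1) ≠ 0 := by
    simp [Complex.cpow_eq_zero_iff, one_add_I_ne w]
  have hneg : (-(α : ℂ) - 1) = -((α : ℂ) + 1) := by ring
  rw [hneg, Complex.cpow_neg]
  field_simp
  exact hconst

lemma fourier_hW_zero {α : ℝ} (hα : 0 < α) :
    𝓕 (hW α) 0 = (1 / (2 * π : ℝ) : ℂ) ^ ((α : ℂ) + 1) * Complex.Gamma ((α : ℂ) + 1) := by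
  rw [Real.fourier_eq']
  simp only [inner_zero_right, mul_zero, neg_zero, zero_mul, Complex.ofReal_zero,
    Complex.exp_zero, one_smul]
  have h1 : (∫ v : ℝ, hW α v) = ∫ v in Set.Ioi (0 : ℝ), hW α v := by
    rw [MeasureTheory.setIntegral_eq_integral_of_forall_compl_eq_zero]
    intro x hx
    exact hW_of_nonpos hα.ne' (by simpa using hx)
  have h2 : (∫ v in Set.Ioi (0 : ℝ), hW α v)
      = ∫ t in Set.Ioi (0 : ℝ), (t : ℂ) ^ (((α : ℂ) + 1) - 1) * Complex.exp (-((2 * π : ℝ) * t)) := by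
    refine MeasureTheory.setIntegral_congr_fun measurableSet_Ioi fun x hx => ?_
    rw [hW_of_pos (Set.mem_Ioi.1 hx)]
    push_cast
    ring_nf
  have h3 := integral_cpow_mul_exp_neg_mul_Ioi (a := (α : ℂ) + 1) (r := 2 * π)
    (by simp; positivity) (by positivity)
  rw [h1, h2, h3]

lemma fourier_hW_zero_ne {α : ℝ} (hα : 0 < α) : 𝓕 (hW α) 0 ≠ 0 := by
  rw [fourier_hW_zero hα]
  apply mul_ne_zero
  · simp only [ne_eq, Complex.cpow_eq_zero_iff, not_and_or]
    left
    intro hc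
    rw [div_eq_zero_iff] at hc
    rcases hc with hc | hc
    · exact one_ne_zero hc
    · have : (2 * π : ℝ) = 0 := by exact_mod_cast hc
      nlinarith [Real.pi_pos]
  · exact Complex.Gamma_ne_zero_of_re_pos (by simp; positivity)

lemma integrable_fourier_hW {α : ℝ} (hα : 0 < α) : Integrable (𝓕 (hW α)) := by
  have hcontg : Continuous fun w : ℝ => (1 + I * (w : ℂ)) ^ (-(α : ℂ) - 1) := by
    refine continuous_iff_continuousAt.2 fun x => ?_
    exact (continuousAt_cpow_const (by simp [Complex.mem_slitPlane_iff])).comp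
      (by fun_prop)
  have hnorm : ∀ w : ℝ, ‖(1 + I * (w : ℂ)) ^ (-(α : ℂ) - 1)‖
      = (1 + ‖w‖ ^ 2) ^ (-(α + 1) / 2) := by
    intro w
    rw [Complex.norm_cpow_of_ne_zero (one_add_I_ne w)]
    have h1 : ‖1 + I * (w : ℂ)‖ = Real.sqrt (1 + w ^ 2) := by
      rw [Complex.norm_def, Complex.normSq_apply]
      simp
      ring_nf
    have h2 : ((-(α : ℂ) - 1)).im = 0 := by simp
    have h3 : ((-(α : ℂ) - 1)).re = -(α + 1) := by simp; ring
    rw [h1, h2, h3, mul_zero, Real.exp_zero, div_one, Real.sqrt_eq_rpow,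
      ← Real.rpow_mul (by positivity)]
    rw [Real.norm_eq_abs, _root_.sq_abs]
    congr 1
    ring
  have hint : Integrable fun w : ℝ => 𝓕 (hW α) 0 * (1 + I * (w : ℂ)) ^ (-(α : ℂ) - 1) := by
    refine Integrable.const_mul ?_ _
    refine ((integrable_rpow_neg_one_add_norm_sq (E := ℝ)
      (r := α + 1) (by simpa using hα)).mono' hcontg.aestronglyMeasurable ?_)
    exact Filter.Eventually.of_forall fun w => le_of_eq (hnorm w)
  exact hint.congr (Filter.Eventually.of_forall fun w => (fourier_hW_eq hα w).symm)

open scoped RealInnerProductSpace in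
lemma key1 {α : ℝ} (hα : 0 < α) (μ : ℝ) :
    𝓕 (hW α) 0 * ∫ s : ℝ, Complex.exp ((2 * π * (s * μ) : ℝ) * I)
      * (1 + I * (s : ℂ)) ^ (-(α : ℂ) - 1) = hW α μ := by
  have hinv := (continuous_hW hα).fourierInv_fourier_eq (integrable_hW hα)
    (integrable_fourier_hW hα)
  have h := congrFun hinv μ
  rw [Real.fourierInv_eq'] at h
  rw [← h, ← integral_const_mul]
  congr 1
  funext v
  rw [fourier_hW_eq hα v]
  simp only [RCLike.inner_apply, conj_trivial, smul_eq_mul]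
  ring

lemma cpow_I_mul {z : ℂ} (hz : z.im < 0) (w : ℂ) : (I * z) ^ w = I ^ w * z ^ w := by
  have hz0 : z ≠ 0 := by
    intro h
    rw [h] at hz
    simp at hz
  have hIz : I * z ≠ 0 := mul_ne_zero I_ne_zero hz0
  rw [Complex.cpow_def_of_ne_zero hIz, Complex.cpow_def_of_ne_zero I_ne_zero,
    Complex.cpow_def_of_ne_zero hz0, ← Complex.exp_add]
  congr 1
  rw [Complex.log_mul I_ne_zero hz0 ?_]
  · ring
  · constructor
    · have h1 := Complex.neg_pi_lt_arg z
      rw [Complex.arg_I]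
      linarith [Real.pi_pos]
    · rw [Complex.arg_I]
      have h2 : z.arg < 0 := Complex.arg_neg_iff.2 hz
      linarith [Real.pi_pos]

lemma one_add_mul_I_eq (s : ℝ) : I * ((s : ℂ) - I) = 1 + I * s := by
  have h : I * ((s : ℂ) - I) = I * s - I * I := by ring
  rw [h, Complex.I_mul_I]
  ring

lemma I_cpow_ne (w : ℂ) : (I : ℂ) ^ w ≠ 0 := by
  simp [Complex.cpow_eq_zero_iff, I_ne_zero]

lemma key2 {α : ℝ} (hα : 0 < α) (μ : ℝ) :
    ∫ s : ℝ, Complex.exp ((2 * π * (s * μ) : ℝ) * I) * ((s : ℂ) - I) ^ (-(α : ℂ) - 1)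
      = (𝓕 (hW α) 0)⁻¹ * (I ^ (-(α : ℂ) - 1))⁻¹ * hW α μ := by
  have hb : ∀ s : ℝ, (1 + I * (s : ℂ)) ^ (-(α : ℂ) - 1)
      = I ^ (-(α : ℂ) - 1) * ((s : ℂ) - I) ^ (-(α : ℂ) - 1) := by
    intro s
    rw [← one_add_mul_I_eq s, cpow_I_mul (by simp) _]
  have h := key1 hα μ
  have h2 : (∫ s : ℝ, Complex.exp ((2 * π * (s * μ) : ℝ) * I)
        * (1 + I * (s : ℂ)) ^ (-(α : ℂ) - 1))
      = I ^ (-(α : ℂ) - 1) * ∫ s : ℝ, Complex.exp ((2 * π * (s * μ) : ℝ) * I)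
        * ((s : ℂ) - I) ^ (-(α : ℂ) - 1) := by
    rw [← integral_const_mul]
    congr 1
    funext s
    rw [hb s]
    ring
  rw [h2] at h
  have hG := fourier_hW_zero_ne hα
  have hI := I_cpow_ne (-(α : ℂ) - 1)
  set X := ∫ s : ℝ, Complex.exp ((2 * π * (s * μ) : ℝ) * I) * ((s : ℂ) - I) ^ (-(α : ℂ) - 1)
    with hX
  rw [← h]
  calc X = ((𝓕 (hW α) 0)⁻¹ * 𝓕 (hW α) 0) * ((I ^ (-(α : ℂ) - 1))⁻¹ * I ^ (-(α : ℂ) - 1)) * X := by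
        rw [inv_mul_cancel₀ hG, inv_mul_cancel₀ hI, one_mul, one_mul]
    _ = (𝓕 (hW α) 0)⁻¹ * (I ^ (-(α : ℂ) - 1))⁻¹ * (𝓕 (hW α) 0
          * (I ^ (-(α : ℂ) - 1) * X)) := by ring

lemma conj_psiW (α : ℝ) (x : ℝ) :
    (starRingEnd ℂ) (psiW α x) = ((x : ℂ) - I) ^ (-(α : ℂ) - 1) := by
  have harg : ((x : ℂ) + I).arg ≠ π := by
    rw [Ne, Complex.arg_eq_pi_iff]
    simp
  have hc : (starRingEnd ℂ) (-(α : ℂ) - 1) = -(α : ℂ) - 1 := by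
    simp [map_sub]
  have hconj : (starRingEnd ℂ) ((x : ℂ) + I) = (x : ℂ) - I := by
    simp [map_add]
    rfl
  rw [psiW]
  calc (starRingEnd ℂ) (((x : ℂ) + I) ^ (-(α : ℂ) - 1))
      = (starRingEnd ℂ) (((x : ℂ) + I) ^ ((starRingEnd ℂ) (-(α : ℂ) - 1))) := by rw [hc]
    _ = (starRingEnd ℂ) ((x : ℂ) + I) ^ (-(α : ℂ) - 1) :=
        (Complex.conj_cpow _ _ harg).symm
    _ = ((x : ℂ) - I) ^ (-(α : ℂ) - 1) := by rw [hconj]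

lemma waveletT_exp {α : ℝ} (hα : 0 < α) {a : ℝ} (ha : 0 < a) (b lam : ℝ) :
    waveletT α (fun x => Complex.exp (2 * π * I * lam * x)) a b
      = Complex.exp (2 * π * I * lam * b)
        * ((𝓕 (hW α) 0)⁻¹ * (I ^ (-(α : ℂ) - 1))⁻¹ * hW α (lam * a)) := by
  set g : ℝ → ℂ := fun t =>
    Complex.exp (2 * π * I * lam * t) * ((((t - b) / a : ℝ) : ℂ) - I) ^ (-(α : ℂ) - 1) with hg
  have hstep1 : waveletT α (fun x => Complex.exp (2 * π * I * lam * x)) a b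
      = (a : ℂ)⁻¹ * ∫ t : ℝ, g t := by
    rw [waveletT, hg]
    simp only [conj_psiW]
  have hcomp : ∀ s : ℝ, g (a * s + b)
      = Complex.exp (2 * π * I * lam * b)
        * (Complex.exp ((2 * π * (s * (lam * a)) : ℝ) * I) * ((s : ℂ) - I) ^ (-(α : ℂ) - 1)) := by
    intro s
    have harg : ((a * s + b - b) / a : ℝ) = s := by
      rw [add_sub_cancel_right, mul_div_cancel_left₀ _ ha.ne']
    rw [hg]
    simp only [harg]
    rw [← mul_assoc, ← Complex.exp_add]
    congr 2
    push_cast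
    ring
  have hsub : (∫ x : ℝ, g (a * x + b)) = |a⁻¹| • ∫ t : ℝ, g t := by
    have h1 := MeasureTheory.Measure.integral_comp_mul_left (fun y : ℝ => g (y + b)) a
    have h2 := MeasureTheory.integral_add_right_eq_self (μ := volume) g b
    simpa [h2] using h1
  have hane : (a : ℂ) ≠ 0 := ofReal_ne_zero.2 ha.ne'
  have hall : (∫ t : ℝ, g t) = (a : ℂ) * ∫ x : ℝ, g (a * x + b) := by
    rw [hsub, abs_of_pos (inv_pos.2 ha), Complex.real_smul, Complex.ofReal_inv,
      ← mul_assoc, mul_inv_cancel₀ hane, one_mul]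
  have hint2 : (∫ x : ℝ, g (a * x + b))
      = Complex.exp (2 * π * I * lam * b)
        * ((𝓕 (hW α) 0)⁻¹ * (I ^ (-(α : ℂ) - 1))⁻¹ * hW α (lam * a)) := by
    calc (∫ x : ℝ, g (a * x + b))
        = ∫ s : ℝ, Complex.exp (2 * π * I * lam * b)
            * (Complex.exp ((2 * π * (s * (lam * a)) : ℝ) * I)
              * ((s : ℂ) - I) ^ (-(α : ℂ) - 1)) :=
          MeasureTheory.integral_congr_ae (Filter.Eventually.of_forall fun s => hcomp s)
      _ = Complex.exp (2 * π * I * lam * b)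
            * ∫ s : ℝ, Complex.exp ((2 * π * (s * (lam * a)) : ℝ) * I)
              * ((s : ℂ) - I) ^ (-(α : ℂ) - 1) := integral_const_mul _ _
      _ = _ := by rw [key2 hα (lam * a)]
  rw [hstep1, hall, hint2, ← mul_assoc, inv_mul_cancel₀ hane, one_mul]

end Stmt3Aux

theorem stmt3 (α : ℝ) (hα : 0 < α) :
    (∃ C : ℂ, ∀ lam : ℝ, 0 < lam → ∀ a : ℝ, 0 < a → ∀ b : ℝ,
      waveletT α (fun x => Complex.exp (2 * π * I * lam * x)) a b =
        C * (a : ℂ) ^ (α : ℂ) * (lam : ℂ) ^ (α : ℂ)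
          * Complex.exp (2 * π * I * lam * ((b : ℂ) + a * I))) ∧
    (∀ lam : ℝ, lam ≤ 0 → ∀ a : ℝ, 0 < a → ∀ b : ℝ,
      waveletT α (fun x => Complex.exp (2 * π * I * lam * x)) a b = 0) := by
  constructor
  · refine ⟨(𝓕 (Stmt3Aux.hW α) 0)⁻¹ * (I ^ (-(α : ℂ) - 1))⁻¹, ?_⟩
    intro lam hlam a ha b
    rw [Stmt3Aux.waveletT_exp hα ha b lam]
    have hμ : 0 < lam * a := mul_pos hlam ha
    rw [Stmt3Aux.hW_of_pos hμ]
    have hsplit : ((lam * a : ℝ) : ℂ) ^ (α : ℂ) = (lam : ℂ) ^ (α : ℂ) * (a : ℂ) ^ (α : ℂ) := by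
      push_cast
      exact Complex.mul_cpow_ofReal_nonneg hlam.le ha.le _
    have hexp : Complex.exp (2 * π * I * lam * ((b : ℂ) + a * I))
        = Complex.exp (2 * π * I * lam * b) * Complex.exp ((-(2 * π * (lam * a)) : ℝ) : ℂ) := by
      rw [← Complex.exp_add]
      congr 1
      push_cast
      linear_combination (2 * (π : ℂ) * lam * a) * Complex.I_sq
    rw [hexp, hsplit]
    ring
  · intro lam hlam a ha b
    rw [Stmt3Aux.waveletT_exp hα ha b lam,
      Stmt3Aux.hW_of_nonpos hα.ne' (mul_nonpos_of_nonpos_of_nonneg hlam ha.le)]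
    ring
end

section
/- (Wavelet regularity, direct direction) Let 0 < β < α, let f: ℝ → ℂ be bounded and continuous, and let ψ: ℝ → ℂ satisfy |ψ(x)| ≤ C(1+|x|)^{−α−1} and ∫_ℝ x^k ψ(x) dx = 0 for all integers 0 ≤ k < α. If f ∈ C^β(x₀), i.e., there is a polynomial P of degree < β with |f(x) − P(x−x₀)| ≪ |x−x₀|^β globally, then the wavelet transform W(a,b) = a^{−1} ∫_ℝ f(t) conj(ψ((t−b)/a)) dt satisfies W(a,b) ≪ a^β + |b−x₀|^β as (a,b) → (0⁺, x₀). -/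
open Complex MeasureTheory Real

private lemma aux_int (s r : ℝ) (hs : 0 ≤ s) (hr : s + 1 < r) :
    Integrable (fun x : ℝ => |x| ^ s * (1 + |x|) ^ (-r)) := by
  have h1 : (1 : ℝ) < r - s := by linarith
  have hint : Integrable (fun x : ℝ => (1 + ‖x‖) ^ (-(r - s))) :=
    integrable_one_add_norm (by simpa using h1)
  refine hint.mono' ?_ (Filter.Eventually.of_forall fun x => ?_)
  · exact ((_root_.continuous_abs.rpow_const fun x => Or.inr hs).mul
      ((continuous_const.add _root_.continuous_abs).rpow_const fun x =>
        Or.inl (show (1:ℝ) + |x| ≠ 0 by positivity))).aestronglyMeasurable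
  · have h0 : (0 : ℝ) < 1 + |x| := by positivity
    have hnn : (0 : ℝ) ≤ |x| ^ s * (1 + |x|) ^ (-r) := by positivity
    rw [Real.norm_eq_abs, _root_.abs_of_nonneg hnn, Real.norm_eq_abs]
    calc |x| ^ s * (1 + |x|) ^ (-r)
        ≤ (1 + |x|) ^ s * (1 + |x|) ^ (-r) := by
          apply mul_le_mul_of_nonneg_right _ (by positivity)
          exact Real.rpow_le_rpow (abs_nonneg x) (by linarith) hs
      _ = (1 + |x|) ^ (-(r - s)) := by
          rw [← Real.rpow_add h0]; ring_nf

private lemma aux_rpow_add (β u v : ℝ) (hβ : 0 ≤ β) (hu : 0 ≤ u) (hv : 0 ≤ v) :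
    (u + v) ^ β ≤ 2 ^ β * (u ^ β + v ^ β) := by
  have h1 : u + v ≤ 2 * max u v := by
    rcases le_total u v with h | h
    · rw [max_eq_right h]; linarith
    · rw [max_eq_left h]; linarith
  have h2 : (max u v) ^ β ≤ u ^ β + v ^ β := by
    rcases le_total u v with h | h
    · rw [max_eq_right h]
      have := Real.rpow_nonneg hu β; linarith
    · rw [max_eq_left h]
      have := Real.rpow_nonneg hv β; linarith
  calc (u + v) ^ β ≤ (2 * max u v) ^ β := Real.rpow_le_rpow (by positivity) h1 hβ
    _ = 2 ^ β * (max u v) ^ β :=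
        Real.mul_rpow (by norm_num) (le_max_iff.2 (Or.inl hu))
    _ ≤ 2 ^ β * (u ^ β + v ^ β) := by
        apply mul_le_mul_of_nonneg_left h2 (by positivity)


private lemma aux_cov {E : Type*} [NormedAddCommGroup E] [NormedSpace ℝ E] (F : ℝ → E)
    (a b : ℝ) : ∫ t : ℝ, F ((t - b) / a) = |a| • ∫ x : ℝ, F x :=
  calc (∫ t : ℝ, F ((t - b) / a)) = ∫ t : ℝ, (fun s : ℝ => F (s / a)) (t - b) := rfl
    _ = ∫ s : ℝ, F (s / a) := integral_sub_right_eq_self (μ := volume) (fun s : ℝ => F (s / a)) b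
    _ = |a| • ∫ x : ℝ, F x := Measure.integral_comp_div F a

theorem stmt4 (α β : ℝ) (hβ0 : 0 < β) (hβα : β < α)
    (f ψ : ℝ → ℂ) (hfc : Continuous f) (hfb : ∃ M : ℝ, ∀ x, ‖f x‖ ≤ M)
    (hψm : Measurable ψ)
    (hψdecay : ∃ C > (0:ℝ), ∀ x : ℝ, ‖ψ x‖ ≤ C * (1 + |x|) ^ (-α - 1))
    (hψmom : ∀ k : ℕ, (k : ℝ) < α → (∫ x : ℝ, (x : ℂ) ^ k * ψ x) = 0)
    (x₀ : ℝ)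
    -- f ∈ C^β(x₀), globally
    (hHol : ∃ P : Polynomial ℂ, (∀ k : ℕ, β ≤ (k : ℝ) → P.coeff k = 0) ∧
      ∃ C > (0:ℝ), ∀ x : ℝ, ‖f x - P.eval ((x - x₀ : ℝ) : ℂ)‖ ≤ C * |x - x₀| ^ β) :
    ∃ C > (0:ℝ), ∃ δ > (0:ℝ), ∀ a b : ℝ, 0 < a → a < δ → |b - x₀| < δ →
      ‖(a : ℂ)⁻¹ * ∫ t : ℝ, f t * (starRingEnd ℂ) (ψ ((t - b) / a))‖
        ≤ C * (a ^ β + |b - x₀| ^ β) := by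
  obtain ⟨M, hM⟩ := hfb
  obtain ⟨Cψ, hCψ0, hCψ⟩ := hψdecay
  obtain ⟨P, hPc, CH, hCH0, hCH⟩ := hHol
  -- basic measurability of conj ∘ ψ
  have hψm' : Measurable fun x : ℝ => (starRingEnd ℂ) (ψ x) :=
    (continuous_star.measurable).comp hψm
  -- monomials times conj ψ are integrable and have zero integral
  have hmono : ∀ k : ℕ, (k : ℝ) < α →
      Integrable (fun x : ℝ => (x : ℂ) ^ k * (starRingEnd ℂ) (ψ x)) := by
    intro k hk
    have hint : Integrable (fun x : ℝ => Cψ * (|x| ^ (k : ℝ) * (1 + |x|) ^ (-(α + 1)))) :=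
      (aux_int (k : ℝ) (α + 1) (Nat.cast_nonneg k) (by linarith)).const_mul Cψ
    refine hint.mono' ?_ (Filter.Eventually.of_forall fun x => ?_)
    · exact ((Complex.measurable_ofReal.pow_const k).mul hψm').aestronglyMeasurable
    · have h0 : (0 : ℝ) < 1 + |x| := by positivity
      rw [norm_mul, norm_pow, Complex.norm_real, Real.norm_eq_abs, RCLike.norm_conj]
      calc |x| ^ k * ‖ψ x‖ ≤ |x| ^ k * (Cψ * (1 + |x|) ^ (-α - 1)) := by
            apply mul_le_mul_of_nonneg_left (hCψ x) (by positivity)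
        _ = Cψ * (|x| ^ (k : ℝ) * (1 + |x|) ^ (-(α + 1))) := by
            rw [Real.rpow_natCast]
            ring_nf
  have hmono0 : ∀ k : ℕ, (k : ℝ) < α →
      (∫ x : ℝ, (x : ℂ) ^ k * (starRingEnd ℂ) (ψ x)) = 0 := by
    intro k hk
    have : (fun x : ℝ => (x : ℂ) ^ k * (starRingEnd ℂ) (ψ x))
        = fun x : ℝ => (starRingEnd ℂ) ((x : ℂ) ^ k * ψ x) := by
      funext x
      simp [map_mul, map_pow, Complex.conj_ofReal]
    rw [this, integral_conj, hψmom k hk, map_zero]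
  -- polynomials of low degree times conj ψ: integrable with zero integral
  have hpoly : ∀ Q : Polynomial ℂ, (∀ k : ℕ, Q.coeff k ≠ 0 → (k : ℝ) < α) →
      Integrable (fun x : ℝ => Q.eval (x : ℂ) * (starRingEnd ℂ) (ψ x)) ∧
      (∫ x : ℝ, Q.eval (x : ℂ) * (starRingEnd ℂ) (ψ x)) = 0 := by
    intro Q hQ
    have hev : (fun x : ℝ => Q.eval (x : ℂ) * (starRingEnd ℂ) (ψ x))
        = fun x : ℝ => ∑ k ∈ Finset.range (Q.natDegree + 1),
            Q.coeff k * ((x : ℂ) ^ k * (starRingEnd ℂ) (ψ x)) := by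
      funext x
      rw [Polynomial.eval_eq_sum_range, Finset.sum_mul]
      simp [mul_assoc]
    have hterm : ∀ k ∈ Finset.range (Q.natDegree + 1),
        Integrable (fun x : ℝ => Q.coeff k * ((x : ℂ) ^ k * (starRingEnd ℂ) (ψ x))) := by
      intro k _
      by_cases h : Q.coeff k = 0
      · simp only [h, zero_mul]
        exact integrable_zero _ _ _
      · exact (hmono k (hQ k h)).const_mul _
    constructor
    · rw [hev]
      exact integrable_finset_sum _ hterm
    · rw [hev, integral_finset_sum _ hterm]
      refine Finset.sum_eq_zero fun k _ => ?_
      by_cases h : Q.coeff k = 0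
      · simp [h]
      · rw [integral_const_mul, hmono0 k (hQ k h), mul_zero]
  -- two basic integrable weights
  have hg0 : Integrable (fun x : ℝ => (1 + |x|) ^ (-α - 1)) := by
    have h := integrable_one_add_norm (μ := (volume : Measure ℝ)) (r := α + 1)
      (by simpa using (by linarith : (1:ℝ) < α + 1))
    simpa [Real.norm_eq_abs, show -(α+1) = -α-1 by ring] using h
  have hg1 : Integrable (fun x : ℝ => |x| ^ β * (1 + |x|) ^ (-α - 1)) := by
    simpa [show -(α+1) = -α-1 by ring] using aux_int β (α + 1) hβ0.le (by linarith)
  set I₁ : ℝ := ∫ x : ℝ, |x| ^ β * (1 + |x|) ^ (-α - 1) with hI₁def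
  set I₂ : ℝ := ∫ x : ℝ, (1 + |x|) ^ (-α - 1) with hI₂def
  have hI1 : (0:ℝ) ≤ I₁ := integral_nonneg fun x => by positivity
  have hI2 : (0:ℝ) ≤ I₂ := integral_nonneg fun x => by positivity
  set K : ℝ := CH * Cψ * 2 ^ β with hKdef
  have hK : (0:ℝ) < K := by positivity
  have hM0 : (0:ℝ) ≤ M := le_trans (norm_nonneg _) (hM 0)
  refine ⟨K * (I₁ + I₂) + 1, by nlinarith, 1, one_pos, ?_⟩
  intro a b ha _ _
  have ha' : a ≠ 0 := ne_of_gt ha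
  set c : ℝ := |b - x₀| with hcdef
  have hc0 : (0:ℝ) ≤ c := abs_nonneg _
  -- the composed polynomial
  set Q : Polynomial ℂ :=
    P.comp (Polynomial.C (a:ℂ) * Polynomial.X + Polynomial.C ((b - x₀ : ℝ):ℂ)) with hQdef
  have hQcoeff : ∀ k : ℕ, Q.coeff k ≠ 0 → (k:ℝ) < α := by
    intro k hk
    have hP0 : P ≠ 0 := by
      intro h
      exact hk (by simp [hQdef, h])
    have hdegP : (P.natDegree : ℝ) < β := by
      by_contra h
      exact Polynomial.leadingCoeff_ne_zero.mpr hP0 (hPc P.natDegree (le_of_not_gt h))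
    have hdegQ : Q.natDegree ≤ P.natDegree := by
      refine le_trans Polynomial.natDegree_comp_le ?_
      have h1 : (Polynomial.C (a:ℂ) * Polynomial.X
          + Polynomial.C ((b - x₀ : ℝ):ℂ)).natDegree ≤ 1 := Polynomial.natDegree_linear_le
      calc P.natDegree * (Polynomial.C (a:ℂ) * Polynomial.X
            + Polynomial.C ((b - x₀ : ℝ):ℂ)).natDegree
          ≤ P.natDegree * 1 := Nat.mul_le_mul_left _ h1
        _ = P.natDegree := mul_one _
    have hkQ : k ≤ Q.natDegree := Polynomial.le_natDegree_of_ne_zero hk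
    have : (k : ℝ) ≤ (P.natDegree : ℝ) := by exact_mod_cast le_trans hkQ hdegQ
    linarith
  have hQev : ∀ t : ℝ, Q.eval (((t - b) / a : ℝ) : ℂ) = P.eval ((t - x₀ : ℝ) : ℂ) := by
    intro t
    rw [hQdef, Polynomial.eval_comp]
    congr 1
    simp only [Polynomial.eval_add, Polynomial.eval_mul, Polynomial.eval_C, Polynomial.eval_X]
    have haC : (a : ℂ) ≠ 0 := by exact_mod_cast ha'
    push_cast
    field_simp
    ring
  -- integrability of f * conj ψ
  have hmeasaff : Measurable fun t : ℝ => (t - b) / a := (measurable_id.sub_const b).div_const a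
  have hfψint : Integrable (fun t : ℝ => f t * (starRingEnd ℂ) (ψ ((t - b) / a))) := by
    have hdom : Integrable (fun t : ℝ => M * Cψ * (1 + |(t - b)/a|) ^ (-α - 1)) :=
      (((hg0.comp_div ha').comp_sub_right (μ := volume) b).const_mul (M * Cψ))
    refine hdom.mono' ?_ (Filter.Eventually.of_forall fun t => ?_)
    · exact (hfc.aestronglyMeasurable.mul (hψm'.comp hmeasaff).aestronglyMeasurable)
    · rw [norm_mul, RCLike.norm_conj]
      calc ‖f t‖ * ‖ψ ((t - b)/a)‖
          ≤ M * (Cψ * (1 + |(t - b)/a|) ^ (-α - 1)) :=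
            mul_le_mul (hM t) (hCψ _) (norm_nonneg _) hM0
        _ = M * Cψ * (1 + |(t - b)/a|) ^ (-α - 1) := by ring
  -- the polynomial part is integrable with zero integral
  have hHint := (hpoly Q hQcoeff).1
  have hF2int : Integrable
      (fun t : ℝ => P.eval ((t - x₀ : ℝ):ℂ) * (starRingEnd ℂ) (ψ ((t - b)/a))) := by
    have h := ((hHint.comp_div ha').comp_sub_right (μ := volume) b)
    refine h.congr (Filter.Eventually.of_forall fun t => ?_)
    simp only
    rw [hQev]
  have hF20 : (∫ t : ℝ, P.eval ((t - x₀ : ℝ):ℂ) * (starRingEnd ℂ) (ψ ((t - b)/a))) = 0 := by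
    have heq : (fun t : ℝ => P.eval ((t - x₀ : ℝ):ℂ) * (starRingEnd ℂ) (ψ ((t - b)/a)))
        = fun t : ℝ =>
          (fun x : ℝ => Q.eval (x : ℂ) * (starRingEnd ℂ) (ψ x)) ((t - b)/a) := by
      funext t
      simp only
      rw [hQev]
    rw [heq, aux_cov (fun x : ℝ => Polynomial.eval (x:ℂ) Q * (starRingEnd ℂ) (ψ x)) a b,
      (hpoly Q hQcoeff).2, smul_zero]
  -- splitting
  have hsplit : (∫ t : ℝ, f t * (starRingEnd ℂ) (ψ ((t - b) / a)))
      = ∫ t : ℝ, (f t - P.eval ((t - x₀ : ℝ):ℂ)) * (starRingEnd ℂ) (ψ ((t - b)/a)) := by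
    have heq : (fun t : ℝ => (f t - P.eval ((t - x₀ : ℝ):ℂ)) * (starRingEnd ℂ) (ψ ((t - b)/a)))
        = fun t : ℝ => f t * (starRingEnd ℂ) (ψ ((t - b)/a))
          - P.eval ((t - x₀ : ℝ):ℂ) * (starRingEnd ℂ) (ψ ((t - b)/a)) := by
      funext t; ring
    rw [heq, integral_sub hfψint hF2int, hF20, sub_zero]
  -- the dominating weight
  set φ : ℝ → ℝ := fun x => K * ((a ^ β * |x| ^ β + c ^ β) * (1 + |x|) ^ (-α - 1)) with hφdef
  have hφint : Integrable φ := by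
    have h := (hg1.const_mul (K * a ^ β)).add (hg0.const_mul (K * c ^ β))
    refine h.congr (Filter.Eventually.of_forall fun x => ?_)
    simp only [hφdef, Pi.add_apply]
    ring
  have hφcomp : Integrable (fun t : ℝ => φ ((t - b)/a)) :=
    (hφint.comp_div ha').comp_sub_right (μ := volume) b
  -- pointwise bound
  have hpt : ∀ t : ℝ, ‖(f t - P.eval ((t - x₀ : ℝ):ℂ)) * (starRingEnd ℂ) (ψ ((t - b)/a))‖
      ≤ φ ((t - b)/a) := by
    intro t
    have habs : |t - b| = a * |(t - b)/a| := by
      rw [abs_div, abs_of_pos ha]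
      field_simp
    have h1 : |t - x₀| ^ β ≤ 2 ^ β * (a ^ β * |(t - b)/a| ^ β + c ^ β) := by
      calc |t - x₀| ^ β ≤ (|t - b| + c) ^ β :=
            Real.rpow_le_rpow (abs_nonneg _) (abs_sub_le t b x₀) hβ0.le
        _ ≤ 2 ^ β * (|t - b| ^ β + c ^ β) :=
            aux_rpow_add β _ _ hβ0.le (abs_nonneg _) hc0
        _ = 2 ^ β * (a ^ β * |(t - b)/a| ^ β + c ^ β) := by
            rw [habs, Real.mul_rpow ha.le (abs_nonneg _)]
    rw [norm_mul, RCLike.norm_conj]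
    calc ‖f t - P.eval ((t - x₀ : ℝ):ℂ)‖ * ‖ψ ((t - b)/a)‖
        ≤ (CH * |t - x₀| ^ β) * (Cψ * (1 + |(t - b)/a|) ^ (-α - 1)) :=
          mul_le_mul (hCH t) (hCψ _) (norm_nonneg _) (by positivity)
      _ ≤ (CH * (2 ^ β * (a ^ β * |(t - b)/a| ^ β + c ^ β)))
            * (Cψ * (1 + |(t - b)/a|) ^ (-α - 1)) := by
          apply mul_le_mul_of_nonneg_right _ (by positivity)
          exact mul_le_mul_of_nonneg_left h1 hCH0.le
      _ = φ ((t - b)/a) := by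
          simp only [hφdef, hKdef]
          ring
  have hnorm : ‖∫ t : ℝ, (f t - P.eval ((t - x₀ : ℝ):ℂ)) * (starRingEnd ℂ) (ψ ((t - b)/a))‖
      ≤ ∫ t : ℝ, φ ((t - b)/a) :=
    norm_integral_le_of_norm_le hφcomp (Filter.Eventually.of_forall hpt)
  -- evaluate the weight integral
  have hφval : (∫ t : ℝ, φ ((t - b)/a)) = a * (K * (a ^ β * I₁ + c ^ β * I₂)) := by
    rw [aux_cov φ a b, abs_of_pos ha, smul_eq_mul]
    congr 1
    have heq : φ = fun x : ℝ => K * a ^ β * (|x| ^ β * (1 + |x|) ^ (-α - 1))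
        + K * c ^ β * ((1 + |x|) ^ (-α - 1)) := by
      funext x
      simp only [hφdef]
      ring
    rw [heq, integral_add ((hg1.const_mul _)) ((hg0.const_mul _)),
      integral_const_mul, integral_const_mul, ← hI₁def, ← hI₂def]
    ring
  -- finish
  have hnorminv : ‖((a:ℂ))⁻¹‖ = a⁻¹ := by
    rw [norm_inv, Complex.norm_real, Real.norm_eq_abs, abs_of_pos ha]
  rw [norm_mul, hnorminv, hsplit]
  have haβ : (0:ℝ) ≤ a ^ β := Real.rpow_nonneg ha.le β
  have hcβ : (0:ℝ) ≤ c ^ β := Real.rpow_nonneg hc0 β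
  calc a⁻¹ * ‖∫ t : ℝ, (f t - P.eval ((t - x₀ : ℝ):ℂ)) * (starRingEnd ℂ) (ψ ((t - b)/a))‖
      ≤ a⁻¹ * (a * (K * (a ^ β * I₁ + c ^ β * I₂))) := by
        apply mul_le_mul_of_nonneg_left _ (inv_nonneg.2 ha.le)
        rw [← hφval]
        exact hnorm
    _ = K * (a ^ β * I₁ + c ^ β * I₂) := by
        field_simp
    _ ≤ (K * (I₁ + I₂) + 1) * (a ^ β + c ^ β) := by
        nlinarith [mul_nonneg haβ hI2, mul_nonneg hcβ hI1, mul_nonneg haβ hcβ]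
end

section
/- (Jarník–Besicovitch for an invariant class, dilation step) Let Γ be a subgroup of SL₂(ℤ) that is normal in SL₂(ℤ), and let τ ≥ 2. For a cusp a, define A_τ^a as the set of real x such that |x − p/q| ≪ 1/q^τ for infinitely many rationals p/q that are Γ-equivalent to a. Then for every γ ∈ SL₂(ℤ), one has γ(A_τ^a ∩ D_γ) = A_τ^{γ(a)} ∩ γ(D_γ), where D_γ is the complement of the pole of γ; in particular γ maps irrational points of A_τ^a to points of A_τ^{γ(a)}. -/
open Matrix

local notation "SL2Z" => Matrix.SpecialLinearGroup (Fin 2) ℤ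

/-- Möbius action of `SL₂(ℤ)` on `ℚ ∪ {∞}` (with `none = ∞`). -/
noncomputable def mobQ (γ : SL2Z) : Option ℚ → Option ℚ
  | none => if (γ.1 1 0 : ℚ) = 0 then none else some ((γ.1 0 0 : ℚ) / (γ.1 1 0 : ℚ))
  | some x => if (γ.1 1 0 : ℚ) * x + (γ.1 1 1 : ℚ) = 0 then none
      else some (((γ.1 0 0 : ℚ) * x + (γ.1 0 1 : ℚ)) / ((γ.1 1 0 : ℚ) * x + (γ.1 1 1 : ℚ)))

/-- Möbius action of `γ ∈ SL₂(ℤ)` on `ℝ` (away from the pole). -/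
noncomputable def mobR (γ : SL2Z) (x : ℝ) : ℝ :=
  ((γ.1 0 0 : ℝ) * x + (γ.1 0 1 : ℝ)) / ((γ.1 1 0 : ℝ) * x + (γ.1 1 1 : ℝ))

/-- The complement of the pole of `γ` in `ℝ`. -/
def Dgamma (γ : SL2Z) : Set ℝ := {x : ℝ | (γ.1 1 0 : ℝ) * x + (γ.1 1 1 : ℝ) ≠ 0}

/-- The set `A_τ^a` of reals approximable to order `τ` by rationals `Γ`-equivalent
to the cusp `a ∈ ℚ ∪ {∞}`. -/
def Atau (Γ : Subgroup SL2Z) (τ : ℝ) (a : Option ℚ) : Set ℝ :=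
  {x : ℝ | ∃ C > (0:ℝ),
    {r : ℚ | (∃ γ ∈ Γ, mobQ γ (some r) = a) ∧ |x - (r : ℝ)| ≤ C / (r.den : ℝ) ^ τ}.Infinite}

/- ALGEBRAIC LEMMAS (already tested) -/
section Alg
noncomputable def mob' (A B C D : ℚ) : Option ℚ → Option ℚ
  | none => if C = 0 then none else some (A / C)
  | some x => if C * x + D = 0 then none else some ((A * x + B) / (C * x + D))

lemma mobQ_eq (γ : SL2Z) : mobQ γ = mob' (γ.1 0 0) (γ.1 0 1) (γ.1 1 0) (γ.1 1 1) := by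
  funext o; cases o <;> rfl

lemma mob'_none (A B C D : ℚ) : mob' A B C D none = if C = 0 then none else some (A / C) := rfl

lemma mob'_some (A B C D r : ℚ) : mob' A B C D (some r)
    = if C * r + D = 0 then none else some ((A * r + B) / (C * r + D)) := rfl

lemma detQ (γ : SL2Z) : (γ.1 0 0 : ℚ) * (γ.1 1 1 : ℚ) - (γ.1 0 1 : ℚ) * (γ.1 1 0 : ℚ) = 1 := by
  have h := γ.2
  rw [Matrix.det_fin_two] at h
  exact_mod_cast h

lemma detR (γ : SL2Z) : (γ.1 0 0 : ℝ) * (γ.1 1 1 : ℝ) - (γ.1 0 1 : ℝ) * (γ.1 1 0 : ℝ) = 1 := by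
  have h := γ.2; rw [Matrix.det_fin_two] at h; exact_mod_cast h

lemma mul_entry (γ δ : SL2Z) (i j : Fin 2) :
    ((γ * δ).1 i j : ℚ) = (γ.1 i 0 : ℚ) * (δ.1 0 j : ℚ) + (γ.1 i 1 : ℚ) * (δ.1 1 j : ℚ) := by
  have : (γ * δ).1 i j = γ.1 i 0 * δ.1 0 j + γ.1 i 1 * δ.1 1 j := by
    simp [Matrix.SpecialLinearGroup.coe_mul, Matrix.mul_apply, Fin.sum_univ_two]
  exact_mod_cast this

lemma mob'_comp (A B C D A' B' C' D' : ℚ) (hdet : A * D - B * C = 1) (o : Option ℚ) :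
    mob' (A' * A + B' * C) (A' * B + B' * D) (C' * A + D' * C) (C' * B + D' * D) o
      = mob' A' B' C' D' (mob' A B C D o) := by
  cases o with
  | none =>
    by_cases hC : C = 0
    · subst hC
      have hA : A ≠ 0 := by intro h; rw [h] at hdet; simp at hdet
      rw [mob'_none, mob'_none, if_pos rfl, mob'_none]
      simp only [mul_zero, add_zero]
      by_cases hC' : C' = 0
      · simp [hC']
      · rw [if_neg (mul_ne_zero hC' hA), if_neg hC']
        congr 1; field_simp
    · rw [mob'_none, mob'_none, if_neg hC, mob'_some]
      by_cases hc : C' * (A / C) + D' = 0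
      · have h2 : C' * A + D' * C = 0 := by field_simp at hc; linarith
        rw [if_pos h2, if_pos hc]
      · have h2 : C' * A + D' * C ≠ 0 := by
          intro h; apply hc; field_simp; linarith
        rw [if_neg h2, if_neg hc]
        congr 1
        rw [div_eq_div_iff h2 hc]
        field_simp
  | some r =>
    have hLden : (C' * A + D' * C) * r + (C' * B + D' * D)
        = C' * (A * r + B) + D' * (C * r + D) := by ring
    have hLnum : (A' * A + B' * C) * r + (A' * B + B' * D)
        = A' * (A * r + B) + B' * (C * r + D) := by ring
    rw [mob'_some, mob'_some, hLden, hLnum]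
    by_cases h0 : C * r + D = 0
    · have hv0 : A * r + B ≠ 0 := by
        intro h
        have : A * (C * r + D) - C * (A * r + B) = 1 := by ring_nf; linarith [hdet]
        rw [h0, h] at this; simp at this
      rw [if_pos h0, mob'_none]
      simp only [h0, mul_zero, add_zero]
      by_cases hC' : C' = 0
      · simp [hC']
      · rw [if_neg (mul_ne_zero hC' hv0), if_neg hC']
        congr 1; field_simp
    · rw [if_neg h0, mob'_some]
      by_cases hc : C' * ((A * r + B) / (C * r + D)) + D' = 0
      · have h2 : C' * (A * r + B) + D' * (C * r + D) = 0 := by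
          rw [mul_div_assoc', div_add' _ _ _ h0] at hc; exact (div_eq_zero_iff.1 hc).resolve_right h0
        rw [if_pos h2, if_pos hc]
      · have h2 : C' * (A * r + B) + D' * (C * r + D) ≠ 0 := by
          intro h; apply hc; rw [mul_div_assoc', div_add' _ _ _ h0, h, zero_div]
        rw [if_neg h2, if_neg hc]
        congr 1
        rw [div_eq_div_iff h2 hc]
        rw [mul_div_assoc', mul_div_assoc', div_add' _ _ _ h0, div_add' _ _ _ h0]; ring

lemma mobQ_mul (γ δ : SL2Z) (o : Option ℚ) : mobQ (γ * δ) o = mobQ γ (mobQ δ o) := by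
  rw [mobQ_eq, mobQ_eq, mobQ_eq]
  rw [mul_entry γ δ 0 0, mul_entry γ δ 0 1, mul_entry γ δ 1 0, mul_entry γ δ 1 1]
  exact mob'_comp _ _ _ _ _ _ _ _ (detQ δ) o

lemma mobQ_one (o : Option ℚ) : mobQ 1 o = o := by
  cases o with
  | none => simp [mobQ]
  | some r => norm_num [mobQ]

lemma mobQ_inv_mobQ (γ : SL2Z) (o : Option ℚ) : mobQ γ⁻¹ (mobQ γ o) = o := by
  rw [← mobQ_mul, inv_mul_cancel, mobQ_one]
end Alg

/- FINITENESS (tested) -/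
lemma finite_bounded (x C B : ℝ) :
    {r : ℚ | |x - (r:ℝ)| ≤ C ∧ (r.den : ℝ) ≤ B}.Finite := by
  set N : ℕ := ⌈(|x| + C) * B⌉₊ with hN
  set B' : ℕ := ⌈B⌉₊ with hB'
  have hsub : {r : ℚ | |x - (r:ℝ)| ≤ C ∧ (r.den : ℝ) ≤ B} ⊆
      (fun p : ℤ × ℕ => (p.1 : ℚ) / (p.2 : ℚ)) '' (Set.Icc (-(N:ℤ)) (N:ℤ) ×ˢ Set.Iic B') := by
    rintro r ⟨h1, h2⟩
    have hC0 : (0:ℝ) ≤ C := le_trans (abs_nonneg _) h1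
    refine ⟨(r.num, r.den), ⟨?_, ?_⟩, Rat.num_div_den r⟩
    · have hr : |(r:ℝ)| ≤ |x| + C := by
        have := abs_sub_abs_le_abs_sub (r:ℝ) x
        rw [abs_sub_comm] at h1
        linarith
      have hnum : |(r.num : ℝ)| ≤ (|x| + C) * B := by
        have hcast : (r:ℝ) = (r.num : ℝ) / (r.den : ℝ) := by rw [Rat.cast_def]
        have habs : |(r.num : ℝ)| = |(r:ℝ)| * (r.den : ℝ) := by
          rw [hcast, abs_div, abs_of_nonneg (by positivity : (0:ℝ) ≤ (r.den:ℝ))]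
          have : (r.den : ℝ) ≠ 0 := by exact_mod_cast r.den_nz
          field_simp
        rw [habs]
        calc |(r:ℝ)| * (r.den : ℝ) ≤ (|x| + C) * (r.den:ℝ) :=
              mul_le_mul_of_nonneg_right hr (by positivity)
          _ ≤ (|x| + C) * B :=
              mul_le_mul_of_nonneg_left h2 (by linarith [abs_nonneg x])
      have hle : |(r.num : ℝ)| ≤ (N : ℝ) := le_trans hnum (Nat.le_ceil _)
      have h' : |r.num| ≤ (N : ℤ) := by exact_mod_cast hle
      simp only [Set.mem_Icc]
      exact ⟨by linarith [neg_abs_le r.num], by linarith [le_abs_self r.num]⟩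
    · have : (r.den : ℝ) ≤ (B' : ℝ) := le_trans h2 (Nat.le_ceil _)
      exact Set.mem_Iic.2 (by exact_mod_cast this)
  exact (((Set.finite_Icc _ _).prod (Set.finite_Iic _)).image _).subset hsub

/- DENOMINATOR BOUND (tested) -/
lemma num_eq (r : ℚ) : (r.num : ℚ) = r * (r.den : ℚ) := by
  have hq : ((r.den : ℚ)) ≠ 0 := by exact_mod_cast r.den_nz
  exact (div_eq_iff hq).1 (Rat.num_div_den r)

lemma den_bound (A B C D : ℤ) (r : ℚ) (h : (C:ℚ) * r + (D:ℚ) ≠ 0) :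
    ((((A:ℚ) * r + B) / ((C:ℚ) * r + D)).den : ℚ) ≤ (r.den : ℚ) * |(C:ℚ) * r + D| := by
  have hq : ((r.den : ℚ)) ≠ 0 := by exact_mod_cast r.den_nz
  have hq0 : (0:ℚ) ≤ (r.den : ℚ) := by positivity
  have key : ((C * r.num + D * r.den : ℤ) : ℚ) = (r.den : ℚ) * ((C:ℚ) * r + D) := by
    push_cast; rw [num_eq]; ring
  have hden0 : (C * r.num + D * r.den : ℤ) ≠ 0 := by
    intro h0
    have h2 : (0:ℚ) = (r.den : ℚ) * ((C:ℚ) * r + D) := by rw [← key, h0]; simp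
    rcases mul_eq_zero.1 h2.symm with h' | h'
    · exact hq h'
    · exact h h'
  have e3 : ((A:ℚ) * r + B) / ((C:ℚ) * r + D)
      = ((A * r.num + B * r.den : ℤ) : ℚ) / ((C * r.num + D * r.den : ℤ) : ℚ) := by
    rw [div_eq_div_iff h (by rw [key]; exact mul_ne_zero hq h)]
    push_cast
    rw [num_eq]
    ring
  rw [e3]
  have hdvd : ((((A * r.num + B * r.den : ℤ) : ℚ) / ((C * r.num + D * r.den : ℤ) : ℚ)).den : ℤ)
      ∣ (C * r.num + D * r.den : ℤ) := by
    rw [← Rat.divInt_eq_div]; exact Rat.den_dvd _ _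
  have hle : ((((A * r.num + B * r.den : ℤ) : ℚ) / ((C * r.num + D * r.den : ℤ) : ℚ)).den : ℤ)
      ≤ |C * r.num + D * r.den| :=
    Int.le_of_dvd (abs_pos.2 hden0) ((dvd_abs _ _).2 hdvd)
  have h4 : ((((A * r.num + B * r.den : ℤ) : ℚ) / ((C * r.num + D * r.den : ℤ) : ℚ)).den : ℚ)
      ≤ |((C * r.num + D * r.den : ℤ) : ℚ)| := by
    rw [← Int.cast_abs]; exact_mod_cast hle
  calc _ ≤ |((C * r.num + D * r.den : ℤ) : ℚ)| := h4
    _ = (r.den : ℚ) * |(C:ℚ) * r + D| := by rw [key, abs_mul, abs_of_nonneg hq0]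

/- FORWARD LEMMA -/
lemma forward (Γ : Subgroup SL2Z) (hΓ : Γ.Normal) (τ : ℝ) (hτ : 2 ≤ τ)
    (a : Option ℚ) (γ : SL2Z) (x : ℝ) (hxD : x ∈ Dgamma γ) (hx : x ∈ Atau Γ τ a) :
    mobR γ x ∈ Atau Γ τ (mobQ γ a) := by
  obtain ⟨C, hC, hS⟩ := hx
  have hxD' : (γ.1 1 0 : ℝ) * x + (γ.1 1 1 : ℝ) ≠ 0 := hxD
  set cR : ℝ := (γ.1 1 0 : ℝ) with hcR
  set dR : ℝ := (γ.1 1 1 : ℝ) with hdR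
  set U : ℝ := |cR * x + dR| with hUdef
  have hU : 0 < U := abs_pos.2 hxD'
  set ε : ℝ := U / (2 * (|cR| + 1)) with hεdef
  have hcabs : (0:ℝ) ≤ |cR| := abs_nonneg _
  have hε : 0 < ε := by positivity
  -- lower bound on |cR r + dR| for r near x
  have hlow : ∀ r : ℝ, |x - r| ≤ ε → U / 2 ≤ |cR * r + dR| := by
    intro r hr
    have he : cR * r + dR = (cR * x + dR) - cR * (x - r) := by ring
    have h1 : |cR * (x - r)| ≤ |cR| * ε := by
      rw [abs_mul]; exact mul_le_mul_of_nonneg_left hr hcabs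
    have h2 : |cR| * ε ≤ U / 2 := by
      rw [hεdef, mul_div_assoc', div_le_div_iff₀ (by positivity) (by norm_num)]
      nlinarith
    have h3 := abs_sub_abs_le_abs_sub (cR * x + dR) (cR * (x - r))
    rw [← he] at h3
    linarith
  set M : ℝ := |cR| * (|x| + ε) + |dR| + 1 with hMdef
  have hM1 : (1:ℝ) ≤ M := by
    have h1 : (0:ℝ) ≤ |cR| * (|x| + ε) := by positivity
    have h2 : (0:ℝ) ≤ |dR| := abs_nonneg _
    rw [hMdef]; linarith
  have hM0 : (0:ℝ) < M := lt_of_lt_of_le one_pos hM1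
  have hub : ∀ r : ℝ, |x - r| ≤ ε → |cR * r + dR| ≤ M := by
    intro r hr
    have h1 : |r| ≤ |x| + ε := by
      have := abs_sub_abs_le_abs_sub r x
      rw [abs_sub_comm] at hr
      linarith
    calc |cR * r + dR| ≤ |cR * r| + |dR| := abs_add_le _ _
      _ = |cR| * |r| + |dR| := by rw [abs_mul]
      _ ≤ |cR| * (|x| + ε) + |dR| := by nlinarith
      _ ≤ M := by rw [hMdef]; linarith
  -- the infinite set S' of good approximants near x
  set S : Set ℚ := {r : ℚ | (∃ δ ∈ Γ, mobQ δ (some r) = a) ∧ |x - (r : ℝ)| ≤ C / (r.den : ℝ) ^ τ}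
    with hSdef
  set S' : Set ℚ := {r ∈ S | |x - (r:ℝ)| ≤ ε} with hS'def
  have hS' : S'.Infinite := by
    have hfin : (S \ S').Finite := by
      apply (finite_bounded x C (C / ε)).subset
      rintro r ⟨hrS, hrns⟩
      have hne : ¬ |x - (r:ℝ)| ≤ ε := fun h => hrns ⟨hrS, h⟩
      push_neg at hne
      have hden1 : (1:ℝ) ≤ (r.den : ℝ) := by exact_mod_cast r.den_pos
      have hrpow1 : (1:ℝ) ≤ (r.den : ℝ) ^ τ := by
        calc (1:ℝ) = (r.den:ℝ) ^ (0:ℝ) := (Real.rpow_zero _).symm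
          _ ≤ (r.den : ℝ) ^ τ := Real.rpow_le_rpow_of_exponent_le hden1 (by linarith)
      have hrle : (r.den : ℝ) ≤ (r.den : ℝ) ^ τ := by
        calc (r.den:ℝ) = (r.den:ℝ) ^ (1:ℝ) := (Real.rpow_one _).symm
          _ ≤ (r.den : ℝ) ^ τ := Real.rpow_le_rpow_of_exponent_le hden1 (by linarith)
      have happrox := hrS.2
      constructor
      · calc |x - (r:ℝ)| ≤ C / (r.den : ℝ) ^ τ := happrox
          _ ≤ C / 1 := by gcongr
          _ = C := div_one C
      · -- ε < C / den^τ  ⇒ den^τ ≤ C/ε ⇒ den ≤ C/ε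
        have h5 : ε < C / (r.den : ℝ) ^ τ := lt_of_lt_of_le hne happrox
        have hpows : (0:ℝ) < (r.den : ℝ) ^ τ := Real.rpow_pos_of_pos (by positivity) _
        have h6 : (r.den : ℝ) ^ τ < C / ε := by
          rw [lt_div_iff₀ hε]
          have h7 := (lt_div_iff₀ hpows).1 h5
          nlinarith [h7]
        linarith
    have hsub2 : S \ (S \ S') ⊆ S' := by
      rintro r ⟨hrS, hr2⟩
      by_contra hcon
      exact hr2 ⟨hrS, hcon⟩
    exact ((hS.diff hfin).mono hsub2)
  -- the rational Möbius map
  set g : ℚ → ℚ := fun r => ((γ.1 0 0 : ℚ) * r + (γ.1 0 1 : ℚ)) / ((γ.1 1 0 : ℚ) * r + (γ.1 1 1 : ℚ))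
    with hgdef
  have hkey : ∀ r ∈ S', ((γ.1 1 0 : ℚ) * r + (γ.1 1 1 : ℚ)) ≠ 0 ∧
      mobQ γ (some r) = some (g r) ∧ ((g r : ℚ) : ℝ) = mobR γ (r : ℝ) := by
    rintro r ⟨hrS, hrnear⟩
    have hc1 : ((((γ.1 1 0 : ℚ) * r + (γ.1 1 1 : ℚ)) : ℚ) : ℝ) = cR * (r:ℝ) + dR := by
      push_cast; rw [hcR, hdR]
    have hne : ((γ.1 1 0 : ℚ) * r + (γ.1 1 1 : ℚ)) ≠ 0 := by
      intro h0
      have h2 : cR * (r:ℝ) + dR = 0 := by rw [← hc1, h0]; simp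
      have h3 := hlow (r:ℝ) hrnear
      rw [h2] at h3
      simp at h3
      linarith
    refine ⟨hne, ?_, ?_⟩
    · show (if (γ.1 1 0 : ℚ) * r + (γ.1 1 1 : ℚ) = 0 then none else _) = _
      rw [if_neg hne]
    · rw [hgdef, mobR]
      push_cast
      ring
  -- injectivity on S'
  have hinj : Set.InjOn g S' := by
    intro r1 h1 r2 h2 heq
    have e1 := (hkey r1 h1).2.1
    have e2 := (hkey r2 h2).2.1
    have : mobQ γ (some r1) = mobQ γ (some r2) := by rw [e1, e2, heq]
    have := congrArg (mobQ γ⁻¹) this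
    rw [mobQ_inv_mobQ, mobQ_inv_mobQ] at this
    exact Option.some.inj this
  -- the new constant
  set C' : ℝ := (2 * C / U ^ 2) * M ^ τ with hC'def
  have hMτ : (0:ℝ) < M ^ τ := Real.rpow_pos_of_pos hM0 _
  have hC' : 0 < C' := by positivity
  refine ⟨C', hC', ?_⟩
  apply (hS'.image hinj).mono
  rintro - ⟨r, hr, rfl⟩
  obtain ⟨hrS, hrnear⟩ := hr
  obtain ⟨hne, hmob, hcast⟩ := hkey r ⟨hrS, hrnear⟩
  constructor
  · -- Γ-equivalence of g r to mobQ γ a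
    obtain ⟨δ, hδΓ, hδr⟩ := hrS.1
    refine ⟨γ * δ * γ⁻¹, hΓ.conj_mem δ hδΓ γ, ?_⟩
    rw [mobQ_mul, mobQ_mul, ← hmob, mobQ_inv_mobQ, hδr]
  · -- approximation bound
    have hden1 : (1:ℝ) ≤ (r.den : ℝ) := by exact_mod_cast r.den_pos
    have hr0 : cR * (r:ℝ) + dR ≠ 0 := by
      intro h0
      have := hlow (r:ℝ) hrnear
      rw [h0] at this
      simp at this
      linarith
    have hlb := hlow (r:ℝ) hrnear
    have hub' := hub (r:ℝ) hrnear
    -- difference identity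
    have hdiff : mobR γ x - mobR γ (r:ℝ) = (x - (r:ℝ)) / ((cR * x + dR) * (cR * (r:ℝ) + dR)) := by
      rw [mobR, mobR, div_sub_div _ _ hxD' hr0]
      congr 1
      rw [hcR, hdR]
      linear_combination (x - (r:ℝ)) * detR γ
    -- denominator bound for g r
    have hdenb : ((g r).den : ℝ) ≤ (r.den : ℝ) * M := by
      have hQ := den_bound (γ.1 0 0) (γ.1 0 1) (γ.1 1 0) (γ.1 1 1) r hne
      have hcast2 : (((r.den : ℚ) * |(γ.1 1 0 : ℚ) * r + (γ.1 1 1 : ℚ)| : ℚ) : ℝ)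
          = (r.den : ℝ) * |cR * (r:ℝ) + dR| := by
        push_cast; rw [hcR, hdR]
      have : ((g r).den : ℝ) ≤ (r.den : ℝ) * |cR * (r:ℝ) + dR| := by
        rw [← hcast2]
        exact_mod_cast hQ
      calc ((g r).den : ℝ) ≤ (r.den : ℝ) * |cR * (r:ℝ) + dR| := this
        _ ≤ (r.den : ℝ) * M := by gcongr
    have hgden1 : (1:ℝ) ≤ ((g r).den : ℝ) := by exact_mod_cast (g r).den_pos
    have hpow : ((g r).den : ℝ) ^ τ ≤ (r.den : ℝ) ^ τ * M ^ τ := by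
      rw [← Real.mul_rpow (by positivity) (le_of_lt hM0)]
      exact Real.rpow_le_rpow (by positivity) hdenb (by linarith)
    -- final chain
    have happ : |x - (r:ℝ)| ≤ C / (r.den : ℝ) ^ τ := hrS.2
    have hpows : (0:ℝ) < (r.den : ℝ) ^ τ := Real.rpow_pos_of_pos (by positivity) _
    have hgpows : (0:ℝ) < ((g r).den : ℝ) ^ τ := Real.rpow_pos_of_pos (by positivity) _
    have hbound : |mobR γ x - ((g r : ℚ) : ℝ)| ≤ C' / ((g r).den : ℝ) ^ τ := by
      rw [hcast, hdiff, abs_div, abs_mul, ← hUdef]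
      calc |x - (r:ℝ)| / (U * |cR * (r:ℝ) + dR|)
          ≤ (C / (r.den : ℝ) ^ τ) / (U * (U/2)) :=
            div_le_div₀ (by positivity) happ (by positivity)
              (mul_le_mul_of_nonneg_left hlb (le_of_lt hU))
          _ = (2 * C / U ^ 2) / (r.den : ℝ) ^ τ := by
            rw [div_eq_div_iff (by positivity) (ne_of_gt hpows)]
            field_simp
          _ ≤ C' / ((g r).den : ℝ) ^ τ := by
            rw [hC'def, div_le_div_iff₀ hpows hgpows]
            have h9 : (2 * C / U ^ 2) * (((g r).den : ℝ) ^ τ)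
                ≤ (2 * C / U ^ 2) * ((r.den : ℝ) ^ τ * M ^ τ) :=
              mul_le_mul_of_nonneg_left hpow (by positivity)
            nlinarith [h9]
    exact hbound

theorem stmt6 (Γ : Subgroup SL2Z) (hΓ : Γ.Normal) (τ : ℝ) (hτ : 2 ≤ τ)
    (a : Option ℚ) (γ : SL2Z) :
    mobR γ '' (Atau Γ τ a ∩ Dgamma γ) = Atau Γ τ (mobQ γ a) ∩ (mobR γ '' Dgamma γ) := by
  ext y
  constructor
  · rintro ⟨x, ⟨hxA, hxD⟩, rfl⟩
    exact ⟨forward Γ hΓ τ hτ a γ x hxD hxA, ⟨x, hxD, rfl⟩⟩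
  · rintro ⟨hyA, x, hxD, rfl⟩
    refine ⟨x, ⟨?_, hxD⟩, rfl⟩
    have hxD' : (γ.1 1 0 : ℝ) * x + (γ.1 1 1 : ℝ) ≠ 0 := hxD
    have hinv10 : ((γ⁻¹).1 1 0 : ℝ) = -(γ.1 1 0 : ℝ) := by
      rw [Matrix.SpecialLinearGroup.SL2_inv_expl]
      push_cast
      simp
    have hinv11 : ((γ⁻¹).1 1 1 : ℝ) = (γ.1 0 0 : ℝ) := by
      rw [Matrix.SpecialLinearGroup.SL2_inv_expl]
      push_cast
      simp
    have hinv00 : ((γ⁻¹).1 0 0 : ℝ) = (γ.1 1 1 : ℝ) := by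
      rw [Matrix.SpecialLinearGroup.SL2_inv_expl]
      push_cast
      simp
    have hinv01 : ((γ⁻¹).1 0 1 : ℝ) = -(γ.1 0 1 : ℝ) := by
      rw [Matrix.SpecialLinearGroup.SL2_inv_expl]
      push_cast
      simp
    have hdenval : ((γ⁻¹).1 1 0 : ℝ) * (mobR γ x) + ((γ⁻¹).1 1 1 : ℝ)
        = 1 / ((γ.1 1 0 : ℝ) * x + (γ.1 1 1 : ℝ)) := by
      rw [hinv10, hinv11, mobR]
      rw [eq_div_iff hxD']
      field_simp
      linear_combination detR γ
    have hyD : mobR γ x ∈ Dgamma γ⁻¹ := by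
      show ((γ⁻¹).1 1 0 : ℝ) * (mobR γ x) + ((γ⁻¹).1 1 1 : ℝ) ≠ 0
      rw [hdenval]
      exact one_div_ne_zero hxD'
    have hback := forward Γ hΓ τ hτ (mobQ γ a) γ⁻¹ (mobR γ x) hyD hyA
    have hmobinv : mobR γ⁻¹ (mobR γ x) = x := by
      rw [mobR]
      rw [hdenval, hinv00, hinv01]
      have hnum : (γ.1 1 1 : ℝ) * (mobR γ x) + (-(γ.1 0 1 : ℝ))
          = x / ((γ.1 1 0 : ℝ) * x + (γ.1 1 1 : ℝ)) := by
        rw [mobR, eq_div_iff hxD']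
        rw [mul_div_assoc', div_add' _ _ _ hxD', div_mul_cancel₀ _ hxD']
        linear_combination x * detR γ
      rw [hnum, div_div_eq_mul_div, div_one, div_mul_cancel₀ _ hxD']
    rw [hmobinv, mobQ_inv_mobQ] at hback
    exact hback
end
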